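/- Any two distinct cells K_i = F_i(K) and K_j = F_j(K) (i ≠ j) of the d-dimensional Sierpinski gasket intersect in exactly one point, the midpoint p_{ij} = (p_i + p_j)/2. -/

import Mathlib

open MeasureTheory Set Filter
noncomputable section

abbrev E (d : ℕ) := EuclideanSpace ℝ (Fin d)

variable {d : ℕ}

/-- The maps of the Sierpinski gasket IFS: `F p i x = (p i + x)/2`. -/
def F (p : Fin (d+1) → E d) (i : Fin (d+1)) (x : E d) : E d := midpoint ℝ (p i) x

/-- `F_x = F_{i₁} ∘ ⋯ ∘ F_{iₙ}` for a word `x = i₁…iₙ`. -/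
def Fword (p : Fin (d+1) → E d) (w : List (Fin (d+1))) : E d → E d :=
  w.foldr (fun i f => F p i ∘ f) id

/-- The cell `K_x = F_x(K)`. -/
def Kcell (p : Fin (d+1) → E d) (K : Set (E d)) (w : List (Fin (d+1))) : Set (E d) :=
  Fword p w '' K

/-- Edges of the augmented rooted tree (Sierpinski graph): vertical edges to the
parent (drop the last letter) and horizontal edges between distinct equal-length
words whose cells intersect. -/
def Edge (p : Fin (d+1) → E d) (K : Set (E d)) (x y : List (Fin (d+1))) : Prop :=
  (x ≠ [] ∧ y = x.dropLast) ∨ (y ≠ [] ∧ x = y.dropLast) ∨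
    (x ≠ y ∧ x.length = y.length ∧ (Kcell p K x ∩ Kcell p K y).Nonempty)

/-- The symmetry group of `K`: isometries of `ℝ^d` mapping `K` onto itself. -/
def symGroup (K : Set (E d)) : Subgroup (E d ≃ᵢ E d) where
  carrier := {g | g '' K = K}
  one_mem' := by simp
  mul_mem' := by
    intro a b ha hb
    simp only [Set.mem_setOf_eq] at *
    have h : ⇑(a * b) = ⇑a ∘ ⇑b := rfl
    rw [h, Set.image_comp, hb, ha]
  inv_mem' := by
    intro a ha
    simp only [Set.mem_setOf_eq] at *
    conv_lhs => rw [← ha]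
    rw [← Set.image_comp]
    simp



/-! ### Auxiliary lemmas -/

open Finset in
theorem aiAux {m n : ℕ} (p : Fin n → EuclideanSpace ℝ (Fin m))
    (hp : ∀ i j, i ≠ j → dist (p i) (p j) = 1) : AffineIndependent ℝ p := by
  rw [affineIndependent_iff]
  intro s w hw0 hws e he
  set w' : Fin n → ℝ := fun i => if i ∈ s then w i else 0 with hw'
  have hw'0 : ∑ i, w' i = 0 := by
    rw [← Finset.sum_subset (Finset.subset_univ s) (by intro x _ hx; simp [w', hx])]
    rw [← hw0]; exact Finset.sum_congr rfl fun x hx => by simp [w', hx]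
  have hw's : ∑ i, w' i • p i = 0 := by
    rw [← Finset.sum_subset (Finset.subset_univ s) (by intro x _ hx; simp [w', hx])]
    rw [← hws]; exact Finset.sum_congr rfl fun x hx => by simp [w', hx]
  suffices h : ∀ i, w' i = 0 by
    have := h e; simpa [hw', he] using this
  set A : Fin n → ℝ := fun i => ‖p i‖^2 with hA
  have hin : ∀ i j, (inner ℝ (p i) (p j) : ℝ)
      = (A i + A j - (if i = j then 0 else 1))/2 := by
    intro i j
    by_cases h : i = j
    · subst h
      rw [real_inner_self_eq_norm_sq]; simp [A]
    · have h1 : ‖p i - p j‖ = 1 := by rw [← dist_eq_norm]; exact hp i j h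
      have := norm_sub_sq_real (p i) (p j)
      rw [h1] at this
      simp only [h, if_false, hA]
      nlinarith [this]
  have key : (0:ℝ) = ∑ i, ∑ j, w' i * w' j * inner ℝ (p i) (p j) := by
    have h0 : (0:ℝ) = inner ℝ (∑ i, w' i • p i) (∑ j, w' j • p j) := by
      rw [hw's]; simp
    rw [h0, sum_inner]
    refine Finset.sum_congr rfl fun i _ => ?_
    rw [inner_sum]
    refine Finset.sum_congr rfl fun j _ => ?_
    rw [real_inner_smul_left, real_inner_smul_right]; ring
  set B : ℝ := ∑ j, w' j * A j with hB
  have h1 : ∀ i, ∑ j, w' i * w' j * ((A i + A j - (if i = j then 0 else 1))/2)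
      = w' i * B / 2 + w' i * w' i / 2 := by
    intro i
    have hterm : ∀ j, w' i * w' j * ((A i + A j - (if i = j then 0 else 1))/2)
        = (w' i * (A i - 1)/2) * w' j + (w' i / 2) * (w' j * A j)
          + (if j = i then w' i * w' i / 2 else 0) := by
      intro j; by_cases h : j = i
      · subst h; simp; ring
      · simp only [h, if_false, Ne.symm h]; ring
    simp_rw [hterm]
    rw [Finset.sum_add_distrib, Finset.sum_add_distrib, ← Finset.mul_sum, ← Finset.mul_sum,
      hw'0, Finset.sum_ite_eq' Finset.univ i, if_pos (Finset.mem_univ i)]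
    rw [← hB]; ring
  simp_rw [hin, h1] at key
  rw [Finset.sum_add_distrib] at key
  have h2 : ∑ i : Fin n, w' i * B / 2 = 0 := by
    have : ∀ i : Fin n, w' i * B / 2 = w' i * (B/2) := fun i => by ring
    simp_rw [this, ← Finset.sum_mul, hw'0, zero_mul]
  rw [h2, zero_add] at key
  intro i
  have hnn : ∀ j ∈ Finset.univ, (0:ℝ) ≤ w' j * w' j / 2 := fun j _ => by nlinarith [mul_self_nonneg (w' j)]
  have := (Finset.sum_eq_zero_iff_of_nonneg hnn).mp key.symm i (Finset.mem_univ i)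
  nlinarith [this]


lemma F_dist (p : Fin (d+1) → E d) (i : Fin (d+1)) (x y : E d) :
    dist (F p i x) (F p i y) = dist x y / 2 := by
  simp only [F, midpoint_eq_smul_add]
  rw [dist_eq_norm, ← smul_sub, show (p i + x) - (p i + y) = x - y by abel]
  rw [norm_smul, ← dist_eq_norm]
  norm_num
  ring

lemma vertex_mem (p : Fin (d+1) → E d) (K : Set (E d)) (hKc : IsCompact K)
    (hKne : K.Nonempty) (hKself : K = ⋃ i, F p i '' K) (i : Fin (d+1)) : p i ∈ K := by
  obtain ⟨x, hx⟩ := hKne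
  have hFK : ∀ z ∈ K, F p i z ∈ K := by
    intro z hz
    rw [hKself]
    exact Set.mem_iUnion.2 ⟨i, Set.mem_image_of_mem _ hz⟩
  have hfix : F p i (p i) = p i := by simp [F]
  set g : ℕ → E d := fun n => (F p i)^[n] x with hg
  have hgK : ∀ n, g n ∈ K := by
    intro n; induction n with
    | zero => simpa [g] using hx
    | succ n ih => show (F p i)^[n+1] x ∈ K; rw [Function.iterate_succ_apply']; exact hFK _ ih
  have hdist : ∀ n, dist (g n) (p i) = dist x (p i) / 2^n := by
    intro n; induction n with
    | zero => simp [g]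
    | succ n ih =>
        show dist ((F p i)^[n+1] x) (p i) = _
        rw [Function.iterate_succ_apply', ← hfix, F_dist, hfix]
        show dist (g n) (p i) / 2 = _
        rw [ih]; ring
  have htend : Tendsto g atTop (nhds (p i)) := by
    rw [tendsto_iff_dist_tendsto_zero]
    simp_rw [hdist]
    rw [show (fun n : ℕ => dist x (p i) / 2^n) = fun n : ℕ => dist x (p i) * (1/2:ℝ)^n by
      funext n; rw [div_pow, one_pow]; ring]
    simpa using (tendsto_pow_atTop_nhds_zero_of_lt_one (by norm_num) (by norm_num :
      (1/2:ℝ) < 1)).const_mul (dist x (p i))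
  exact hKc.isClosed.mem_of_tendsto htend (Filter.Eventually.of_forall hgK)

lemma K_subset_hull (p : Fin (d+1) → E d) (K : Set (E d)) (hKc : IsCompact K)
    (hKne : K.Nonempty) (hKself : K = ⋃ i, F p i '' K) :
    K ⊆ convexHull ℝ (Set.range p) := by
  set C := convexHull ℝ (Set.range p) with hC
  have hCne : C.Nonempty := ⟨p 0, subset_convexHull ℝ _ (Set.mem_range_self 0)⟩
  have hCcl : IsClosed C := ((Set.finite_range p).isCompact_convexHull ℝ).isClosed
  have hFC : ∀ i, ∀ c ∈ C, F p i c ∈ C := by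
    intro i c hc
    have hpi : p i ∈ C := subset_convexHull ℝ _ (Set.mem_range_self i)
    have hmid : F p i c = (1/2:ℝ) • (p i) + (1/2:ℝ) • c := by
      simp [F, midpoint_eq_smul_add, smul_add]
    rw [hmid]
    exact (convex_convexHull ℝ _) hpi hc (by norm_num) (by norm_num) (by norm_num)
  have hcont : Continuous fun x : E d => Metric.infDist x C :=
    Metric.continuous_infDist_pt C
  obtain ⟨x0, hx0K, hx0max⟩ := hKc.exists_isMaxOn hKne hcont.continuousOn
  have hhalf : Metric.infDist x0 C ≤ Metric.infDist x0 C / 2 := by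
    have := hKself ▸ hx0K
    obtain ⟨i, y, hyK, hyx0⟩ := by
      rw [hKself] at hx0K
      exact Set.mem_iUnion.1 hx0K |>.imp fun i h => h
    have step : Metric.infDist x0 C ≤ Metric.infDist y C / 2 := by
      by_contra hcon
      push_neg at hcon
      have : Metric.infDist y C < 2 * Metric.infDist x0 C := by linarith
      obtain ⟨c, hcC, hc⟩ := (Metric.infDist_lt_iff hCne).1 this
      have h1 : Metric.infDist x0 C ≤ dist y c / 2 := by
        rw [← hyx0, ← F_dist p i y c]
        exact Metric.infDist_le_dist_of_mem (hFC i c hcC)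
      linarith
    calc Metric.infDist x0 C ≤ Metric.infDist y C / 2 := step
      _ ≤ Metric.infDist x0 C / 2 := by
          have := hx0max (hyK)
          simp only [Set.mem_setOf_eq] at this
          linarith [this]
  have h0 : Metric.infDist x0 C = 0 := by
    have := Metric.infDist_nonneg (x := x0) (s := C)
    linarith
  intro z hz
  have hzle : Metric.infDist z C ≤ 0 := h0 ▸ hx0max hz
  have : Metric.infDist z C = 0 := le_antisymm hzle Metric.infDist_nonneg
  exact hCcl.mem_iff_infDist_zero hCne |>.2 this


lemma exists_weights {n m : ℕ} (p : Fin n → EuclideanSpace ℝ (Fin m)) {x}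
    (hx : x ∈ convexHull ℝ (Set.range p)) :
    ∃ u : Fin n → ℝ, (∀ k, 0 ≤ u k) ∧ ∑ k, u k = 1 ∧ ∑ k, u k • p k = x := by
  rw [convexHull_range_eq_exists_affineCombination] at hx
  obtain ⟨s, w, hw0, hw1, hwx⟩ := hx
  refine ⟨fun k => if k ∈ s then w k else 0, ?_, ?_, ?_⟩
  · intro k
    by_cases h : k ∈ s
    · simp only [if_pos h]; exact hw0 k h
    · simp [h]
  · rw [← Finset.sum_subset (Finset.subset_univ s) (by intro x _ hx; simp [hx])]
    rw [← hw1]; exact Finset.sum_congr rfl fun x hx => by simp [hx]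
  · rw [← Finset.sum_subset (Finset.subset_univ s) (by intro x _ hx; simp [hx])]
    rw [← hwx, s.affineCombination_eq_linear_combination p w hw1]
    exact Finset.sum_congr rfl fun x hx => by simp [hx]

theorem mainAux (p : Fin (d+1) → E d) (hAI : AffineIndependent ℝ p)
    (K : Set (E d)) (hPK : ∀ i, p i ∈ K) (hKC : K ⊆ convexHull ℝ (Set.range p)) :
    ∀ i j : Fin (d+1), i ≠ j →
      (F p i '' K) ∩ (F p j '' K) = {midpoint ℝ (p i) (p j)} := by
  intro i j hij
  apply Set.Subset.antisymm
  · rintro z ⟨⟨a, haK, rfl⟩, b, hbK, hba⟩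
    obtain ⟨u, hu0, hu1, hua⟩ := exists_weights p (hKC haK)
    obtain ⟨v, hv0, hv1, hvb⟩ := exists_weights p (hKC hbK)
    set w : Fin (d+1) → ℝ := fun k => u k / 2 + if k = i then 1/2 else 0 with hw
    set w' : Fin (d+1) → ℝ := fun k => v k / 2 + if k = j then 1/2 else 0 with hw'
    have hFrep : ∀ (c : E d) (t : Fin (d+1) → ℝ) (l : Fin (d+1)), (∑ k, t k • p k = c) →
        ∑ k, (t k / 2 + if k = l then 1/2 else 0) • p k = F p l c := by
      intro c t l htc
      have : F p l c = (1/2 : ℝ) • p l + (1/2 : ℝ) • c := by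
        simp [F, midpoint_eq_smul_add, smul_add]
      rw [this, ← htc, Finset.smul_sum]
      rw [show (fun k => (t k / 2 + if k = l then 1/2 else 0) • p k)
          = fun k => (t k / 2) • p k + (if k = l then (1/2:ℝ) • p l else 0) by
        funext k
        by_cases h : k = l
        · subst h; simp [add_smul]
        · simp [h, add_smul]]
      rw [Finset.sum_add_distrib, Finset.sum_ite_eq' Finset.univ l, if_pos (Finset.mem_univ l)]
      rw [add_comm]
      congr 1
      · exact Finset.sum_congr rfl fun k _ => by rw [div_eq_mul_inv, mul_comm, mul_smul]; norm_num
    have hweq : ∀ k, w k = w' k := by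
      have hsum : ∑ k, (w k - w' k) = 0 := by
        rw [Finset.sum_sub_distrib]
        have h1 : ∑ k, w k = 1 := by
          rw [hw]
          rw [Finset.sum_add_distrib, Finset.sum_ite_eq' Finset.univ i, if_pos (Finset.mem_univ i)]
          rw [← Finset.sum_div, hu1]; norm_num
        have h2 : ∑ k, w' k = 1 := by
          rw [hw']
          rw [Finset.sum_add_distrib, Finset.sum_ite_eq' Finset.univ j, if_pos (Finset.mem_univ j)]
          rw [← Finset.sum_div, hv1]; norm_num
        rw [h1, h2]; ring
      have hcomb : ∑ k, (w k - w' k) • p k = 0 := by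
        rw [show (fun k => (w k - w' k) • p k) = fun k => w k • p k - w' k • p k by
          funext k; rw [sub_smul]]
        rw [Finset.sum_sub_distrib]
        have e1 : ∑ k, w k • p k = F p i a := hFrep a u i hua
        have e2 : ∑ k, w' k • p k = F p j b := hFrep b v j hvb
        rw [e1, e2, hba, sub_self]
      intro k
      have := affineIndependent_iff.1 hAI Finset.univ (fun k => w k - w' k) hsum hcomb k
        (Finset.mem_univ k)
      linarith
    -- deduce u j = 1
    have huj : u j = 1 := by
      have h1 : w j = u j / 2 := by simp only [hw, if_neg (Ne.symm hij), add_zero]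
      have h2 : w' j = v j / 2 + 1/2 := by simp [hw']
      have h3 : u j ≤ 1 := hu1 ▸ Finset.single_le_sum (fun k _ => hu0 k) (Finset.mem_univ j)
      have h4 := hweq j
      rw [h1, h2] at h4
      have := hv0 j
      linarith
    have hapj : a = p j := by
      have hrest : ∑ k ∈ Finset.univ.erase j, u k = 0 := by
        have := Finset.add_sum_erase Finset.univ u (Finset.mem_univ j)
        rw [hu1, huj] at this
        linarith
      have hzero : ∀ k ∈ Finset.univ.erase j, u k = 0 :=
        (Finset.sum_eq_zero_iff_of_nonneg (fun k _ => hu0 k)).1 hrest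
      rw [← hua, ← Finset.add_sum_erase Finset.univ _ (Finset.mem_univ j), huj, one_smul,
        Finset.sum_eq_zero (fun k hk => by rw [hzero k hk, zero_smul]), add_zero]
    rw [hapj]
    rfl
  · intro z hz
    rw [Set.mem_singleton_iff] at hz
    subst hz
    constructor
    · exact ⟨p j, hPK j, rfl⟩
    · exact ⟨p i, hPK i, by rw [F, midpoint_comm]⟩

/-- Distinct level-1 cells of the Sierpinski gasket intersect in exactly one
point, the midpoint of the corresponding vertices. -/
theorem stmt14 (hd : 1 ≤ d) (p : Fin (d+1) → E d)
    (hp : ∀ i j, i ≠ j → dist (p i) (p j) = 1)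
    (K : Set (E d)) (hKc : IsCompact K) (hKne : K.Nonempty)
    (hKself : K = ⋃ i, F p i '' K) :
    ∀ i j : Fin (d+1), i ≠ j →
      (F p i '' K) ∩ (F p j '' K) = {midpoint ℝ (p i) (p j)} := by
  exact mainAux p (aiAux p hp) K (vertex_mem p K hKc hKne hKself)
    (K_subset_hull p K hKc hKne hKself)
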